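/- Let A be a unital ring and a ∈ A. Let T_l : A → A be left multiplication by a and T_r : A → A right multiplication by a (as additive group endomorphisms). If the canonical map P(T_l) → C(T_l) and the canonical map P(T_r) → C(T_r) are both bijective, then there exists n ∈ ℕ such that aⁿ·A = a^{n+1}·A and A·aⁿ = A·a^{n+1} (equality of right ideals and of left ideals, respectively). -/

import Mathlib

/-- The projective limit `P(T)` of the constant system
`⋯ → A --T--> A --T--> A` for an additive endomorphism `T` of `A`: the set of
sequences `x : ℕ → A` with `T (x (k+1)) = x k` for all `k`. -/
def addProjLimit {A : Type*} [AddCommGroup A] (T : AddMonoid.End A) : Type _ :=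
  {x : ℕ → A // ∀ k, T (x (k + 1)) = x k}

/-- The direct system `A --T--> A --T--> A → ⋯` indexed by `ℕ` associated to an
additive endomorphism `T` of `A`: the structure map from stage `i` to stage `j ≥ i`
is `T^(j-i)`. -/
def addIndSys {A : Type*} [AddCommGroup A] (T : AddMonoid.End A) :
    ∀ i j : ℕ, i ≤ j → ((fun _ : ℕ => A) i →+ (fun _ : ℕ => A) j) :=
  fun i j _ => (T ^ (j - i) : AddMonoid.End A)

/-- The inductive limit `C(T)` of the direct system `A --T--> A --T--> A → ⋯`,
taken in the category of abelian groups. -/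
abbrev addIndLimit {A : Type*} [AddCommGroup A] (T : AddMonoid.End A) : Type _ :=
  AddCommGroup.DirectLimit (fun _ : ℕ => A) (addIndSys T)

/-- The canonical map `P(T) → C(T)`, sending `x` to `ι₀ (x 0)`, where
`ι_k : A → C(T)` are the structure maps of the inductive limit (which satisfy
`ι_{k+1} ∘ T = ι_k`). -/
noncomputable def addCanonicalMap {A : Type*} [AddCommGroup A]
    (T : AddMonoid.End A) : addProjLimit T → addIndLimit T :=
  fun x => AddCommGroup.DirectLimit.of (fun _ : ℕ => A) (addIndSys T) 0 (x.1 0)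

instance addIndSys_directed {A : Type*} [AddCommGroup A] (T : AddMonoid.End A) :
    DirectedSystem (fun _ : ℕ => A) (fun i j h => addIndSys T i j h) where
  map_self i x := by
    show (T ^ (i - i)) x = x
    rw [Nat.sub_self, pow_zero]
    rfl
  map_map {k j i} hij hjk x := by
    show (T ^ (k - j)) ((T ^ (j - i)) x) = (T ^ (k - i)) x
    show (T ^ (k - j) * T ^ (j - i)) x = (T ^ (k - i)) x
    rw [← pow_add]
    congr 2
    omega

lemma pow_apply_left {A : Type*} [Ring A] (a : A) (T : AddMonoid.End A)
    (hT : ∀ x, T x = a * x) (n : ℕ) (x : A) : (T ^ n) x = a ^ n * x := by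
  induction n generalizing x with
  | zero => rw [pow_zero, pow_zero, one_mul]; exact AddMonoid.End.one_apply x
  | succ n ih =>
      rw [pow_succ]
      show (T ^ n) (T x) = a ^ (n + 1) * x
      rw [hT, ih (a * x), ← mul_assoc, ← pow_succ]

lemma pow_apply_right {A : Type*} [Ring A] (a : A) (T : AddMonoid.End A)
    (hT : ∀ x, T x = x * a) (n : ℕ) (x : A) : (T ^ n) x = x * a ^ n := by
  induction n generalizing x with
  | zero => rw [pow_zero, pow_zero, mul_one]; exact AddMonoid.End.one_apply x
  | succ n ih =>
      rw [pow_succ]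
      show (T ^ n) (T x) = x * a ^ (n + 1)
      rw [hT, ih (x * a), mul_assoc, ← pow_succ']

lemma exists_pow_eq_of_surjective {A : Type*} [Ring A] (T : AddMonoid.End A)
    (h : Function.Surjective (addCanonicalMap T)) :
    ∃ (y : A) (m : ℕ), (T ^ (m + 1)) y = (T ^ m) 1 := by
  obtain ⟨x, hx⟩ := h (AddCommGroup.DirectLimit.of (fun _ : ℕ => A) (addIndSys T) 0 1)
  have hzero : AddCommGroup.DirectLimit.of (fun _ : ℕ => A) (addIndSys T) 0 (x.1 0 - 1) = 0 := by
    rw [map_sub, sub_eq_zero]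
    exact hx
  obtain ⟨j, hj, hfx⟩ := AddCommGroup.DirectLimit.of.zero_exact _ _ hzero
  have hTpow : (T ^ j) (x.1 0) = (T ^ j) 1 := by
    have h1 : (T ^ (j - 0)) (x.1 0 - 1) = 0 := hfx
    rw [Nat.sub_zero, map_sub, sub_eq_zero] at h1
    exact h1
  refine ⟨x.1 1, j, ?_⟩
  have h0 : T (x.1 1) = x.1 0 := x.2 0
  rw [pow_succ]
  show (T ^ j) (T (x.1 1)) = (T ^ j) 1
  rw [h0, hTpow]

/-- Let `A` be a unital ring and `a ∈ A`.  Let `T_l` be left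
multiplication by `a` and `T_r` right multiplication by `a`, as additive
endomorphisms of `A`.  If the canonical maps `P(T_l) → C(T_l)` and
`P(T_r) → C(T_r)` are both bijective, then there exists `n ∈ ℕ` with
`aⁿ·A = a^(n+1)·A` and `A·aⁿ = A·a^(n+1)`. -/
theorem ideals_stabilize_of_limits_bijective
    (A : Type*) [Ring A] (a : A)
    (hl : Function.Bijective (addCanonicalMap (AddMonoidHom.mulLeft a : AddMonoid.End A)))
    (hr : Function.Bijective (addCanonicalMap (AddMonoidHom.mulRight a : AddMonoid.End A))) :
    ∃ n : ℕ,
      Set.range (fun x : A => a ^ n * x) = Set.range (fun x : A => a ^ (n + 1) * x) ∧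
      Set.range (fun x : A => x * a ^ n) = Set.range (fun x : A => x * a ^ (n + 1)) := by
  obtain ⟨y, m, hy⟩ := exists_pow_eq_of_surjective (AddMonoidHom.mulLeft a : AddMonoid.End A) hl.surjective
  obtain ⟨z, p, hz⟩ := exists_pow_eq_of_surjective (AddMonoidHom.mulRight a : AddMonoid.End A) hr.surjective
  erw [pow_apply_left a _ (fun _ => rfl), pow_apply_left a _ (fun _ => rfl), mul_one] at hy
  erw [pow_apply_right a _ (fun _ => rfl), pow_apply_right a _ (fun _ => rfl), one_mul] at hz
  -- hy : a ^ (m + 1) * y = a ^ m ; hz : z * a ^ (p + 1) = a ^ p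
  refine ⟨max m p, ?_, ?_⟩
  · have key : a ^ (max m p + 1) * y = a ^ max m p := by
      have h : a ^ (max m p) = a ^ (max m p - m) * a ^ m := by
        rw [← pow_add]; congr 1; omega
      calc a ^ (max m p + 1) * y = a ^ (max m p - m) * (a ^ (m + 1) * y) := by
            rw [← mul_assoc, ← pow_add]; congr 2; omega
        _ = a ^ max m p := by rw [hy, ← h]
    ext w
    constructor
    · rintro ⟨u, rfl⟩
      exact ⟨y * u, by simp only [← mul_assoc, key]⟩
    · rintro ⟨u, rfl⟩
      exact ⟨a * u, by dsimp only; rw [← mul_assoc, ← pow_succ]⟩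
  · have key : z * a ^ (max m p + 1) = a ^ max m p := by
      calc z * a ^ (max m p + 1) = z * a ^ (p + 1) * a ^ (max m p - p) := by
            rw [mul_assoc, ← pow_add]; congr 2; omega
        _ = a ^ max m p := by rw [hz, ← pow_add]; congr 1; omega
    ext w
    constructor
    · rintro ⟨u, rfl⟩
      exact ⟨u * z, by simp only [mul_assoc, key]⟩
    · rintro ⟨u, rfl⟩
      exact ⟨u * a, by dsimp only; rw [mul_assoc, ← pow_succ']⟩
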